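/- With the notation of the Gibbs distribution over independent sets (π(χ) ∝ e^{Σ_{i∈χ} w_i}, Φ* = max_{χ∈Λ} Σ_{i∈χ} w_i), for any δ, θ ∈ (0,1): if Φ* > (1/θ)·(|E|·log 2 + log(1/δ)), then π({χ : Σ_{i∈χ} w_i < (1−θ)Φ*}) < δ. -/

import Mathlib

/-- Quantitative form of the `1-δ` weight theorem: if the maximum weight exceeds
`(1/θ)(|E| log 2 + log(1/δ))`, then the Gibbs measure of low-weight schedules is
below `δ`. -/
theorem stmt13 {E : Type*} [Fintype E] [DecidableEq E]
    (Λ : Finset (Finset E)) (hne : Λ.Nonempty)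
    (w : E → ℝ) (hw : ∀ i, 0 ≤ w i)
    (θ δ : ℝ) (hθ : θ ∈ Set.Ioo (0 : ℝ) 1) (hδ : δ ∈ Set.Ioo (0 : ℝ) 1)
    (Φs : ℝ)
    (hΦs : IsGreatest ((fun χ : Finset E => ∑ i ∈ χ, w i) '' (Λ : Set (Finset E))) Φs)
    (hlarge : (1 / θ) * ((Fintype.card E : ℝ) * Real.log 2 + Real.log (1 / δ)) < Φs) :
    (∑ χ ∈ Λ.filter (fun χ => ∑ i ∈ χ, w i < (1 - θ) * Φs), Real.exp (∑ i ∈ χ, w i)) /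
        (∑ χ ∈ Λ, Real.exp (∑ i ∈ χ, w i)) < δ := by
  obtain ⟨hθ0, hθ1⟩ := hθ
  obtain ⟨hδ0, hδ1⟩ := hδ
  obtain ⟨⟨χ₀, hχ₀Λ, hχ₀⟩, hub⟩ := hΦs
  set n := Fintype.card E
  have hDpos : 0 < ∑ χ ∈ Λ, Real.exp (∑ i ∈ χ, w i) :=
    Finset.sum_pos (fun χ _ => Real.exp_pos _) hne
  have hDge : Real.exp Φs ≤ ∑ χ ∈ Λ, Real.exp (∑ i ∈ χ, w i) := by
    rw [← hχ₀]
    exact Finset.single_le_sum (f := fun χ => Real.exp (∑ i ∈ χ, w i))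
      (fun χ _ => (Real.exp_pos _).le) (Finset.mem_coe.mp hχ₀Λ)
  rw [div_lt_iff₀ hDpos]
  have hN : (∑ χ ∈ Λ.filter (fun χ => ∑ i ∈ χ, w i < (1 - θ) * Φs),
      Real.exp (∑ i ∈ χ, w i)) ≤
      ((Λ.filter (fun χ => ∑ i ∈ χ, w i < (1 - θ) * Φs)).card : ℝ) *
        Real.exp ((1 - θ) * Φs) := by
    have := Finset.sum_le_card_nsmul
      (Λ.filter (fun χ => ∑ i ∈ χ, w i < (1 - θ) * Φs))
      (fun χ => Real.exp (∑ i ∈ χ, w i)) (Real.exp ((1 - θ) * Φs))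
      (fun χ hχ => by
        have := (Finset.mem_filter.mp hχ).2
        exact Real.exp_le_exp.mpr this.le)
    simpa [nsmul_eq_mul] using this
  have hcard : ((Λ.filter (fun χ => ∑ i ∈ χ, w i < (1 - θ) * Φs)).card : ℝ) ≤
      (2 : ℝ) ^ n := by
    have h1 : (Λ.filter (fun χ => ∑ i ∈ χ, w i < (1 - θ) * Φs)).card ≤
        Fintype.card (Finset E) := Finset.card_le_univ _
    rw [Fintype.card_finset] at h1
    exact_mod_cast h1.trans_eq rfl
  have hθΦ : (n : ℝ) * Real.log 2 + Real.log (1 / δ) < θ * Φs := by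
    rw [one_div_mul_eq_div, div_lt_iff₀ hθ0] at hlarge
    linarith [hlarge]
  have hkey : (2 : ℝ) ^ n * Real.exp ((1 - θ) * Φs) < δ * Real.exp Φs := by
    have h2 : (2 : ℝ) ^ n = Real.exp ((n : ℝ) * Real.log 2) := by
      rw [Real.exp_nat_mul, Real.exp_log (by norm_num : (0:ℝ) < 2)]
    rw [h2, ← Real.exp_add,
      show δ * Real.exp Φs = Real.exp (Real.log δ + Φs) by
        rw [Real.exp_add, Real.exp_log hδ0]]
    apply Real.exp_lt_exp.mpr
    have hlog : Real.log (1 / δ) = -Real.log δ := by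
      rw [one_div, Real.log_inv]
    rw [hlog] at hθΦ
    nlinarith [hθΦ]
  calc (∑ χ ∈ Λ.filter (fun χ => ∑ i ∈ χ, w i < (1 - θ) * Φs),
      Real.exp (∑ i ∈ χ, w i))
      ≤ ((Λ.filter (fun χ => ∑ i ∈ χ, w i < (1 - θ) * Φs)).card : ℝ) *
        Real.exp ((1 - θ) * Φs) := hN
    _ ≤ (2 : ℝ) ^ n * Real.exp ((1 - θ) * Φs) :=
        mul_le_mul_of_nonneg_right hcard (Real.exp_pos _).le
    _ < δ * Real.exp Φs := hkey
    _ ≤ δ * ∑ χ ∈ Λ, Real.exp (∑ i ∈ χ, w i) :=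
        mul_le_mul_of_nonneg_left hDge hδ0.le
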